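/- Let A and B be two sets of r+1 positive integers each with A = {a₀<…<a_r}, B = {b₀<…<b_r}, define A⊙B = {(aᵢ, b_{r−i}) : 0 ≤ i ≤ r} and A⊞B = {(i,j) ∈ A⊙B : i ≥ j} ∪ {(i,j) ∈ B⊙A : i ≥ j}. If the product ∏_{(i,j)∈A⊞B} u_{ij} (defined when every (i,j) ∈ A⊞B has i ≠ j) equals the single variable u_{ij} for some n ≥ i > j ≥ 1, then either A = B = {i,j} or {A,B} = {{i},{j}}. -/

import Mathlib

open MvPolynomial

lemma prod_X_eq_X {K : Type*} [Field K] (s : Finset (ℕ × ℕ)) (q : ℕ × ℕ)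
    (h : (∏ p ∈ s, (X p : MvPolynomial (ℕ × ℕ) K)) = X q) : s = {q} := by
  have h1 : (monomial (∑ p ∈ s, Finsupp.single p 1) (1 : K))
      = monomial (Finsupp.single q 1) (1 : K) := by
    rw [monomial_sum_one]
    simpa [X] using h
  have h2 : (∑ p ∈ s, Finsupp.single p 1 : (ℕ × ℕ) →₀ ℕ) = Finsupp.single q 1 := by
    rcases (monomial_eq_monomial_iff _ _ (1:K) 1).mp h1 with ⟨h, -⟩ | ⟨h, -⟩
    · exact h
    · exact absurd h one_ne_zero
  ext p
  have := Finsupp.ext_iff.mp h2 p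
  simp only [Finsupp.coe_finset_sum, Finset.sum_apply, Finsupp.single_apply] at this
  rw [Finset.sum_ite_eq' s p (fun _ => 1)] at this
  simp only [Finset.mem_singleton]
  by_cases hp : p ∈ s <;> by_cases hq : q = p <;> simp_all [eq_comm]

lemma image_const {m : ℕ} (a : Fin (m + 1) → ℕ) (x : ℕ) (h : ∀ k, a k = x) :
    Finset.univ.image a = ({x} : Finset ℕ) := by
  ext p
  simp [h, eq_comm]

/-- Let `A = {a₀ < … < a_r}` and `B = {b₀ < … < b_r}` be sets of positive
integers, `A⊙B = {(aᵢ, b_{r-i})}`, and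
`A⊞B = {(i,j) ∈ A⊙B : i ≥ j} ∪ {(i,j) ∈ B⊙A : i ≥ j}`, with all pairs in
`A⊞B` having distinct coordinates. If `∏_{(i,j) ∈ A⊞B} u_{ij}` equals the
single variable `u_{ij}` for some `n ≥ i > j ≥ 1`, then `A = B = {i,j}` or
`{A, B} = {{i}, {j}}`. -/
theorem uss_eq_single_variable {K : Type*} [Field K] {r : ℕ}
    (a b : Fin (r + 1) → ℕ) (ha : StrictMono a) (hb : StrictMono b)
    (hapos : ∀ k, 0 < a k) (hbpos : ∀ k, 0 < b k)
    (n i j : ℕ) (hji : j < i) (hj : 1 ≤ j) (hin : i ≤ n)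
    (AB : Finset (ℕ × ℕ))
    (hAB : AB =
      ((Finset.univ.image fun k : Fin (r + 1) => (a k, b k.rev)) ∪
        (Finset.univ.image fun k : Fin (r + 1) => (b k, a k.rev))).filter
        (fun p => p.2 ≤ p.1))
    (hne : ∀ p ∈ AB, p.1 ≠ p.2)
    (heq : (∏ p ∈ AB, (X p : MvPolynomial (ℕ × ℕ) K)) = X (i, j)) :
    (Finset.univ.image a = ({i, j} : Finset ℕ) ∧
        Finset.univ.image b = ({i, j} : Finset ℕ)) ∨
    (Finset.univ.image a = ({i} : Finset ℕ) ∧ Finset.univ.image b = ({j} : Finset ℕ)) ∨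
    (Finset.univ.image a = ({j} : Finset ℕ) ∧ Finset.univ.image b = ({i} : Finset ℕ)) := by
  have hs : AB = {(i, j)} := prod_X_eq_X AB (i, j) heq
  rw [hs] at hAB
  have hkey : ∀ k : Fin (r + 1),
      (a k = i ∧ b k.rev = j) ∨ (b k.rev = i ∧ a k = j) := by
    intro k
    rcases le_total (b k.rev) (a k) with hle | hle
    · have hm : (a k, b k.rev) ∈ ({(i, j)} : Finset (ℕ × ℕ)) := by
        rw [hAB]
        simp only [Finset.mem_filter, Finset.mem_union, Finset.mem_image]
        exact ⟨Or.inl ⟨k, Finset.mem_univ k, rfl⟩, hle⟩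
      simp only [Finset.mem_singleton, Prod.mk.injEq] at hm
      exact Or.inl hm
    · have hm : (b k.rev, a k) ∈ ({(i, j)} : Finset (ℕ × ℕ)) := by
        rw [hAB]
        simp only [Finset.mem_filter, Finset.mem_union, Finset.mem_image]
        refine ⟨Or.inr ⟨k.rev, Finset.mem_univ _, ?_⟩, hle⟩
        rw [Fin.rev_rev]
      simp only [Finset.mem_singleton, Prod.mk.injEq] at hm
      exact Or.inr hm
  have ha' : ∀ k, a k = i ∨ a k = j := fun k => (hkey k).imp And.left And.right
  have hb' : ∀ k, b k = i ∨ b k = j := by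
    intro k
    have := hkey k.rev
    rw [Fin.rev_rev] at this
    exact (this.imp And.right And.left).symm
  rcases r with _ | _ | r
  · -- r = 0
    have h0 := hkey 0
    have hrev : (0 : Fin 1).rev = 0 := by decide
    rw [hrev] at h0
    rcases h0 with ⟨h1, h2⟩ | ⟨h1, h2⟩
    · exact Or.inr (Or.inl ⟨image_const a i (fun k => by rw [Fin.fin_one_eq_zero k]; exact h1),
        image_const b j (fun k => by rw [Fin.fin_one_eq_zero k]; exact h2)⟩)
    · exact Or.inr (Or.inr ⟨image_const a j (fun k => by rw [Fin.fin_one_eq_zero k]; exact h2),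
        image_const b i (fun k => by rw [Fin.fin_one_eq_zero k]; exact h1)⟩)
  · -- r = 1
    have h01 : a 0 < a 1 := ha (by decide)
    have hb01 : b 0 < b 1 := hb (by decide)
    have ha0 : a 0 = j := by rcases ha' 0 with h | h; · rcases ha' 1 with h' | h' <;> omega
                             · exact h
    have ha1 : a 1 = i := by rcases ha' 1 with h | h; · exact h
                             · omega
    have hb0 : b 0 = j := by rcases hb' 0 with h | h; · rcases hb' 1 with h' | h' <;> omega
                             · exact h
    have hb1 : b 1 = i := by rcases hb' 1 with h | h; · exact h
                             · omega
    left
    constructor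
    · ext p
      simp [Fin.exists_fin_two, ha0, ha1, eq_comm, or_comm]
    · ext p
      simp [Fin.exists_fin_two, hb0, hb1, eq_comm, or_comm]
  · -- r ≥ 2
    exfalso
    have h01 : a ⟨0, by omega⟩ < a ⟨1, by omega⟩ := ha (Fin.mk_lt_mk.mpr (by omega))
    have h12 : a ⟨1, by omega⟩ < a ⟨2, by omega⟩ := ha (Fin.mk_lt_mk.mpr (by omega))
    rcases ha' ⟨0, by omega⟩ with h0 | h0 <;>
      rcases ha' ⟨1, by omega⟩ with h1 | h1 <;>
      rcases ha' ⟨2, by omega⟩ with h2 | h2 <;> omega
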